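/- For all partitions μ, ν of n with f^μ, f^ν ≥ D(n)/a for some a ≥ 1, there exists a partition λ of n such that f^λ ≥ D(n)/(a·√p(n)) and g(λ,μ,ν) ≥ D(n)/(a²·p(n)). -/

import Mathlib

open CategoryTheory

/-- The symmetric group `Sₙ`, realized as permutations of `Fin n`. -/
abbrev SymGrp (n : ℕ) : Type := Equiv.Perm (Fin n)

/-- The dimension of a representation. -/
noncomputable def dimRep {n : ℕ} (V : FDRep ℂ (SymGrp n)) : ℕ := Module.finrank ℂ V

/-- `V` is a complete family of pairwise non-isomorphic irreducible (complex)
representations of the symmetric group `Sₙ`, indexed by the partitions of `n`. -/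
def IsIrrFamily {n : ℕ} (V : Nat.Partition n → FDRep ℂ (SymGrp n)) : Prop :=
  (∀ l, Simple (V l)) ∧
  (∀ l m : Nat.Partition n, Nonempty (V l ≅ V m) → l = m) ∧
  (∀ W : FDRep ℂ (SymGrp n), Simple W → ∃ l, Nonempty (W ≅ V l))

/-- The Kronecker coefficient `g(λ,μ,ν)`: the multiplicity of the irreducible `V λ` in
the (internal) tensor product `V μ ⊗ V ν`, computed as `dim Hom(V μ ⊗ V ν, V λ)`. -/
noncomputable def kron {n : ℕ} (V : Nat.Partition n → FDRep ℂ (SymGrp n))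
    (l m v : Nat.Partition n) : ℕ :=
  Module.finrank ℂ ((MonoidalCategoryStruct.tensorObj (V m) (V v)) ⟶ V l)

/-- The largest dimension `D(n) = max_{λ ⊢ n} f^λ` of an irreducible representation. -/
noncomputable def maxDim {n : ℕ} (V : Nat.Partition n → FDRep ℂ (SymGrp n)) : ℕ :=
  Finset.univ.sup (fun l : Nat.Partition n => dimRep (V l))

/-- The number of partitions `p(n)`. -/
def numPart (n : ℕ) : ℕ := Fintype.card (Nat.Partition n)


section Auxiliary
open Module Representation
universe u
variable {k G : Type u} [Field k] [Group G]

namespace Aux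

def IsSubrep (W : FDRep k G) (p : Submodule k W) : Prop := ∀ g : G, ∀ x ∈ p, W.ρ g x ∈ p

noncomputable def subrep (W : FDRep k G) (p : Submodule k W) (h : IsSubrep W p) : FDRep k G :=
  FDRep.of (V := p)
  { toFun := fun g => (W.ρ g).restrict (fun x hx => h g x hx)
    map_one' := by ext x; simp [LinearMap.restrict_apply]
    map_mul' := fun g₁ g₂ => by ext x; simp [LinearMap.restrict_apply] }

lemma subrep_ρ_apply (W : FDRep k G) (p : Submodule k W) (h : IsSubrep W p) (g : G)
    (x : p) : (subrep W p h).ρ g x = ⟨W.ρ g x, h g x x.2⟩ := rfl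

lemma finrank_subrep (W : FDRep k G) (p : Submodule k W) (h : IsSubrep W p) :
    finrank k (subrep W p h) = finrank k p := rfl

noncomputable def subrepι (W : FDRep k G) (p : Submodule k W) (h : IsSubrep W p) :
    subrep W p h ⟶ W where
  hom := InducedCategory.homMk (ModuleCat.ofHom p.subtype)
  comm := fun _ => rfl

lemma hom_comm_apply {X Y : FDRep k G} (f : X ⟶ Y) (g : G) (x : X) :
    f.hom.hom.hom (X.ρ g x) = Y.ρ g (f.hom.hom.hom x) :=
  congrArg (fun φ => φ.hom.hom x) (f.comm g)

end Aux


section Maschke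
variable [Fintype G]

namespace Aux

lemma exists_invariant_compl [NeZero (Fintype.card G : k)]
    (W : FDRep k G) (p : Submodule k W) (hp : IsSubrep W p) :
    ∃ q : Submodule k W, IsSubrep W q ∧ IsCompl p q := by
  obtain ⟨r, hr⟩ : ∃ r : W →ₗ[k] p, ∀ x : p, r x = x := by
    obtain ⟨q0, hq0⟩ := Submodule.exists_isCompl p
    exact ⟨p.projectionOnto q0 hq0, fun x => by
      simp [Submodule.projectionOnto_apply_left]⟩
  have hS_equiv : ∀ (h : G) (x : W),
      (∑ g : G, ((subrep W p hp).ρ g⁻¹ ∘ₗ (r ∘ₗ W.ρ g))) (W.ρ h x)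
        = (subrep W p hp).ρ h ((∑ g : G, ((subrep W p hp).ρ g⁻¹ ∘ₗ (r ∘ₗ W.ρ g))) x) := by
    intro h x
    rw [LinearMap.sum_apply, LinearMap.sum_apply, map_sum]
    refine Fintype.sum_bijective (· * h) (Group.mulRight_bijective h) _ _ fun g => ?_
    simp only [LinearMap.comp_apply]
    have e1 : W.ρ g (W.ρ h x) = W.ρ (g * h) x := by rw [map_mul]; rfl
    have e2 : ((subrep W p hp).ρ h) ∘ₗ ((subrep W p hp).ρ (g * h)⁻¹) = (subrep W p hp).ρ g⁻¹ := by
      rw [← Module.End.mul_eq_comp, ← map_mul, mul_inv_rev, mul_inv_cancel_left]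
    show (subrep W p hp).ρ g⁻¹ (r (W.ρ g (W.ρ h x)))
      = (subrep W p hp).ρ h ((subrep W p hp).ρ (g * h)⁻¹ (r (W.ρ (g * h) x)))
    rw [e1, ← e2]; rfl
  have hS_retr : ∀ x : p,
      (∑ g : G, ((subrep W p hp).ρ g⁻¹ ∘ₗ (r ∘ₗ W.ρ g))) (x : W) = (Fintype.card G) • x := by
    intro x
    rw [LinearMap.sum_apply]
    rw [Finset.sum_congr rfl (fun g _ => ?_), Finset.sum_const, Finset.card_univ]
    show ((subrep W p hp).ρ g⁻¹) (r (W.ρ g (x : W))) = x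
    have h1 : r (W.ρ g (x : W)) = (subrep W p hp).ρ g x :=
      (hr ⟨W.ρ g (x : W), hp g x x.2⟩).trans (subrep_ρ_apply W p hp g x).symm
    rw [h1]
    have h5 : (subrep W p hp).ρ g⁻¹ * (subrep W p hp).ρ g = 1 := by
      rw [← map_mul, inv_mul_cancel, map_one]
    exact congrArg (fun f : Module.End k (subrep W p hp) => f x) h5
    rfl
  have hπ_retr : ∀ x : p,
      ((Fintype.card G : k)⁻¹ • ∑ g : G, ((subrep W p hp).ρ g⁻¹ ∘ₗ (r ∘ₗ W.ρ g))) (x : W) = x := by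
    intro x
    rw [LinearMap.smul_apply, hS_retr, ← Nat.cast_smul_eq_nsmul k]
    exact inv_smul_smul₀ (NeZero.ne _) x
  refine ⟨LinearMap.ker ((Fintype.card G : k)⁻¹ • ∑ g : G, ((subrep W p hp).ρ g⁻¹ ∘ₗ (r ∘ₗ W.ρ g))),
    ?_, LinearMap.isCompl_of_proj hπ_retr⟩
  intro g x hx
  rw [LinearMap.mem_ker] at hx ⊢
  rw [LinearMap.smul_apply] at hx ⊢
  rw [hS_equiv g x]
  have : ((subrep W p hp).ρ g) ((Fintype.card G:k)⁻¹ • ((∑ g : G, ((subrep W p hp).ρ g⁻¹ ∘ₗ (r ∘ₗ W.ρ g))) x)) = 0 := by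
    rw [hx, map_zero]
  rw [map_smul] at this
  exact this

end Aux
end Maschke

namespace Aux
open Submodule

lemma proj_equivariant (W : FDRep k G) {p q : Submodule k W} (hp : IsSubrep W p)
    (hq : IsSubrep W q) (hpq : IsCompl p q) (g : G) (x : W) :
    p.projectionOnto q hpq (W.ρ g x)
      = (subrep W p hp).ρ g (p.projectionOnto q hpq x) := by
  rw [subrep_ρ_apply]
  set s := p.projectionOnto q hpq x with hs
  set t := q.projectionOnto p hpq.symm x with ht
  have hx : (s : W) + (t : W) = x := Submodule.projection_add_projection_eq_self hpq x
  have h1 : W.ρ g x = W.ρ g (s : W) + W.ρ g (t : W) := by rw [← map_add, hx]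
  rw [h1, map_add]
  have h2 : p.projectionOnto q hpq (W.ρ g (t : W)) = 0 :=
    (Submodule.projectionOnto_apply_eq_zero_iff hpq).mpr (hq g t t.2)
  have h3 : p.projectionOnto q hpq (W.ρ g (s : W)) = ⟨W.ρ g (s : W), hp g s s.2⟩ :=
    Submodule.projectionOnto_apply_left hpq ⟨W.ρ g (s : W), hp g s s.2⟩
  rw [h2, h3, add_zero]

/-- Hom out of a direct-sum decomposition. -/
noncomputable def homProdEquiv (W U : FDRep k G) {p q : Submodule k W} (hp : IsSubrep W p)
    (hq : IsSubrep W q) (hpq : IsCompl p q) :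
    (W ⟶ U) ≃ₗ[k] ((subrep W p hp ⟶ U) × (subrep W q hq ⟶ U)) where
  toFun f := (subrepι W p hp ≫ f, subrepι W q hq ≫ f)
  map_add' f g := by
    rw [Preadditive.comp_add, Preadditive.comp_add]; rfl
  map_smul' c f := by
    rw [CategoryTheory.Linear.comp_smul, CategoryTheory.Linear.comp_smul]; rfl
  invFun ab :=
    { hom := InducedCategory.homMk (ModuleCat.ofHom ((ab.1.hom.hom.hom ∘ₗ p.projectionOnto q hpq)
        + (ab.2.hom.hom.hom ∘ₗ q.projectionOnto p hpq.symm)))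
      comm := fun g => by
        refine FGModuleCat.hom_ext (LinearMap.ext fun x => ?_)
        show ab.1.hom.hom.hom (p.projectionOnto q hpq (W.ρ g x))
            + ab.2.hom.hom.hom (q.projectionOnto p hpq.symm (W.ρ g x))
          = U.ρ g (ab.1.hom.hom.hom (p.projectionOnto q hpq x)
            + ab.2.hom.hom.hom (q.projectionOnto p hpq.symm x))
        rw [proj_equivariant W hp hq hpq, proj_equivariant W hq hp hpq.symm, map_add]
        congr 1
        · exact hom_comm_apply ab.1 g _
        · exact hom_comm_apply ab.2 g _ }
  left_inv f := by
    apply Action.Hom.ext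
    refine FGModuleCat.hom_ext (LinearMap.ext fun x => ?_)
    show f.hom.hom.hom ((p.projectionOnto q hpq x : W))
        + f.hom.hom.hom ((q.projectionOnto p hpq.symm x : W)) = f.hom.hom.hom x
    rw [← map_add]
    exact congrArg _ (Submodule.projection_add_projection_eq_self hpq x)
  right_inv ab := by
    refine Prod.ext (Action.Hom.ext ?_) (Action.Hom.ext ?_)
    · refine FGModuleCat.hom_ext (LinearMap.ext fun (x : p) => ?_)
      show ab.1.hom.hom.hom (p.projectionOnto q hpq (x : W))
          + ab.2.hom.hom.hom (q.projectionOnto p hpq.symm (x : W)) = ab.1.hom.hom.hom x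
      rw [Submodule.projectionOnto_apply_left,
        Submodule.projectionOnto_apply_of_mem_right hpq.symm x.2]
      exact (congrArg (fun y => ab.1.hom.hom.hom x + y) (map_zero ab.2.hom.hom.hom)).trans (add_zero _)
    · refine FGModuleCat.hom_ext (LinearMap.ext fun (x : q) => ?_)
      show ab.1.hom.hom.hom (p.projectionOnto q hpq (x : W))
          + ab.2.hom.hom.hom (q.projectionOnto p hpq.symm (x : W)) = ab.2.hom.hom.hom x
      rw [Submodule.projectionOnto_apply_of_mem_right hpq x.2,
        Submodule.projectionOnto_apply_left]
      exact (congrArg (fun y => y + ab.2.hom.hom.hom x) (map_zero ab.1.hom.hom.hom)).trans (zero_add _)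

end Aux

namespace Aux

lemma hom_ne_zero {X Y : FDRep k G} {f : X ⟶ Y} (hf : f ≠ 0) : f.hom ≠ 0 := by
  intro h
  exact hf (Action.Hom.ext h)

lemma simple_of_irreducible (W : FDRep k G) (hW : Nontrivial W)
    (hirr : ∀ p : Submodule k W, IsSubrep W p → p = ⊥ ∨ p = ⊤) : Simple W := by
  constructor
  intro Y f hmono
  constructor
  · intro hiso h0
    obtain ⟨x, hx⟩ := exists_ne (0 : W)
    have h1 := congrArg Action.Hom.hom (IsIso.inv_hom_id f)
    have h2 : x = f.hom.hom.hom ((CategoryTheory.inv f).hom.hom.hom x) := (congrArg (fun φ => φ.hom.hom x) h1).symm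
    have h3 : x = 0 := by
      rw [h2, congrArg Action.Hom.hom h0]
      rfl
    exact hx h3
  · intro hf
    -- f.hom.hom.hom is injective
    have hker : IsSubrep Y (LinearMap.ker f.hom.hom.hom) := by
      intro g x hx
      rw [LinearMap.mem_ker] at hx ⊢
      have hc : f.hom.hom.hom (Y.ρ g x) = W.ρ g (f.hom.hom.hom x) := hom_comm_apply f g x
      exact hc.trans ((congrArg (W.ρ g) hx).trans (map_zero _))
    have hκ : subrepι Y (LinearMap.ker f.hom.hom.hom) hker ≫ f = 0 := by
      apply Action.Hom.ext
      refine FGModuleCat.hom_ext <| LinearMap.ext fun (x : LinearMap.ker f.hom.hom.hom) => ?_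
      exact x.2
    have hκ0 : subrepι Y (LinearMap.ker f.hom.hom.hom) hker = 0 := by
      have : subrepι Y (LinearMap.ker f.hom.hom.hom) hker ≫ f = 0 ≫ f := by
        rw [hκ, Limits.zero_comp]
      exact (cancel_mono f).mp this
    have hkerbot : LinearMap.ker f.hom.hom.hom = ⊥ := by
      ext x
      simp only [Submodule.mem_bot]
      constructor
      · intro hx
        have : (x : Y) = (subrepι Y (LinearMap.ker f.hom.hom.hom) hker).hom ⟨x, hx⟩ := rfl
        rw [hκ0] at this
        exact this
      · intro hx; rw [hx]; exact (LinearMap.ker f.hom.hom.hom).zero_mem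
    have hinj : Function.Injective f.hom.hom.hom := LinearMap.ker_eq_bot.mp hkerbot
    -- f.hom.hom.hom is surjective
    have hrange : IsSubrep W (LinearMap.range f.hom.hom.hom) := by
      intro g x hx
      obtain ⟨y, rfl⟩ := hx
      exact ⟨Y.ρ g y, hom_comm_apply f g y⟩
    have hsurj : Function.Surjective f.hom.hom.hom := by
      rcases hirr _ hrange with h | h
      · exact absurd (LinearMap.range_eq_bot.mp h) (fun h' => hom_ne_zero hf (FGModuleCat.hom_ext (h'.trans rfl)))
      · exact LinearMap.range_eq_top.mp h
    -- build the inverse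
    let e : Y ≃ₗ[k] W := LinearEquiv.ofBijective f.hom.hom.hom ⟨hinj, hsurj⟩
    have he : ∀ y : Y, e y = f.hom.hom.hom y := fun _ => rfl
    refine ⟨⟨{ hom := InducedCategory.homMk (ModuleCat.ofHom (e.symm : W →ₗ[k] Y)), comm := fun g => ?_ }, ?_, ?_⟩⟩
    · refine FGModuleCat.hom_ext <| LinearMap.ext fun x => ?_
      show e.symm (W.ρ g x) = Y.ρ g (e.symm x)
      apply hinj
      show f.hom.hom.hom (e.symm (W.ρ g x)) = f.hom.hom.hom (Y.ρ g (e.symm x))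
      have h1 : f.hom.hom.hom (e.symm (W.ρ g x)) = W.ρ g x := by
        rw [← he, e.apply_symm_apply]
      have h2 : f.hom.hom.hom (Y.ρ g (e.symm x)) = W.ρ g (f.hom.hom.hom (e.symm x)) :=
        hom_comm_apply f g _
      rw [h1, h2, ← he, e.apply_symm_apply]
    · apply Action.Hom.ext
      refine FGModuleCat.hom_ext <| LinearMap.ext fun y => ?_
      show e.symm (f.hom.hom.hom y) = y
      rw [← he, e.symm_apply_apply]
    · apply Action.Hom.ext
      refine FGModuleCat.hom_ext <| LinearMap.ext fun x => ?_
      show f.hom.hom.hom (e.symm x) = x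
      rw [← he, e.apply_symm_apply]

lemma nontrivial_of_simple (W : FDRep k G) (hs : Simple W) : Nontrivial W := by
  by_contra h
  have hsub : Subsingleton W := not_nontrivial_iff_subsingleton.mp h
  have : (𝟙 W : W ⟶ W) = 0 := by
    apply Action.Hom.ext
    refine FGModuleCat.hom_ext (LinearMap.ext fun x => @Subsingleton.elim _ hsub _ _)
  exact (CategoryTheory.id_nonzero W) this

lemma finrank_pos_of_simple (W : FDRep k G) (hs : Simple W) : 0 < finrank k W :=
  Module.finrank_pos_iff.mpr (nontrivial_of_simple W hs)

end Aux

namespace Aux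

variable [Fintype G]

lemma master [NeZero (Fintype.card G : k)] [IsAlgClosed k] {ι : Type u} [Fintype ι]
    (V : ι → FDRep k G) (hsimple : ∀ i, Simple (V i))
    (hinj : ∀ i j, Nonempty (V i ≅ V j) → i = j)
    (hcomplete : ∀ W : FDRep k G, Simple W → ∃ i, Nonempty (W ≅ V i)) :
    ∀ (W : FDRep k G), finrank k W = ∑ i, finrank k (W ⟶ V i) * finrank k (V i) := by
  suffices H : ∀ (N : ℕ) (W : FDRep k G), finrank k W = N →
      finrank k W = ∑ i, finrank k (W ⟶ V i) * finrank k (V i) by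
    exact fun W => H (finrank k W) W rfl
  intro N
  induction N using Nat.strong_induction_on with
  | _ N IH =>
  intro W hWN
  by_cases h0 : finrank k W = 0
  · -- trivial representation
    haveI hsub : Subsingleton W := Module.finrank_zero_iff.mp h0
    have hz : ∀ i, finrank k (W ⟶ V i) = 0 := by
      intro i
      haveI : Subsingleton (W ⟶ V i) := by
        constructor
        intro f g
        apply Action.Hom.ext
        refine FGModuleCat.hom_ext (LinearMap.ext fun x => ?_)
        have hx0 : x = 0 := @Subsingleton.elim _ hsub _ _
        rw [hx0, map_zero, map_zero]
      exact Module.finrank_zero_of_subsingleton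
    simp [hz, h0]
  · -- W nontrivial : find a minimal nonzero invariant subspace
    haveI hnt : Nontrivial W := by
      apply Module.nontrivial_of_finrank_pos (R := k)
      omega
    have hex : ∃ d : ℕ, ∃ p : Submodule k W, IsSubrep W p ∧ p ≠ ⊥ ∧ finrank k p = d :=
      ⟨finrank k (⊤ : Submodule k W), ⊤, fun g x _ => trivial, bot_ne_top.symm, rfl⟩
    classical
    obtain ⟨S, hS, hSbot, hSrank⟩ := Nat.find_spec hex
    have hmin : ∀ p : Submodule k W, IsSubrep W p → p ≠ ⊥ → Nat.find hex ≤ finrank k p :=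
      fun p hp hpb => Nat.find_min' hex ⟨p, hp, hpb, rfl⟩
    -- the subrep on S is simple
    haveI hSsimple : Simple (subrep W S hS) := by
      apply simple_of_irreducible
      · exact Submodule.nontrivial_iff_ne_bot.mpr hSbot
      · intro t ht
        by_cases htb : Submodule.map S.subtype t = ⊥
        · left
          rw [eq_bot_iff]
          intro x hx
          have hx' : S.subtype x ∈ Submodule.map S.subtype t := Submodule.mem_map_of_mem hx
          rw [htb] at hx'
          have hx0 : S.subtype x = 0 := hx'
          exact (Submodule.mem_bot _).mpr (Subtype.ext hx0)
        · right
          have hmap : IsSubrep W (Submodule.map S.subtype t) := by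
            rintro g x ⟨y, hy, rfl⟩
            exact ⟨(subrep W S hS).ρ g y, ht g y hy, rfl⟩
          have h1 : Nat.find hex ≤ finrank k (Submodule.map S.subtype t) :=
            hmin _ hmap htb
          replace h1 := h1.trans_eq (Submodule.finrank_map_subtype_eq S t)
          have h2 : finrank k t ≤ finrank k S := by
            have h3 := Submodule.finrank_mono (Submodule.map_subtype_le S t)
            exact (Submodule.finrank_map_subtype_eq S t).symm.trans_le h3
          apply Submodule.eq_top_of_finrank_eq
          show finrank k t = finrank k S
          have h4 : finrank k S ≤ finrank k t := by rw [hSrank]; exact h1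
          exact le_antisymm h2 h4
    -- invariant complement
    obtain ⟨Q, hQ, hSQ⟩ := exists_invariant_compl W S hS
    have hadd : finrank k S + finrank k Q = finrank k W :=
      Submodule.finrank_add_eq_of_isCompl hSQ
    have hSpos : 0 < finrank k S := by
      have := finrank_pos_of_simple (subrep W S hS) hSsimple
      exact this
    -- apply induction to Q
    have hQlt : finrank k (subrep W Q hQ) < N := by
      have : finrank k (subrep W Q hQ) = finrank k Q := rfl
      omega
    have hQsum := IH _ hQlt (subrep W Q hQ) rfl
    -- sum for S
    obtain ⟨i₀, ⟨e⟩⟩ := hcomplete _ hSsimple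
    have hSsum : ∑ i, finrank k (subrep W S hS ⟶ V i) * finrank k (V i) = finrank k S := by
      have hif : ∀ i, finrank k (subrep W S hS ⟶ V i) = if i = i₀ then 1 else 0 := by
        intro i
        haveI := hsimple i
        rw [FDRep.finrank_hom_simple_simple]
        congr 1
        simp only [eq_iff_iff]
        constructor
        · rintro ⟨e'⟩
          exact (hinj i₀ i ⟨e.symm ≪≫ e'⟩).symm
        · rintro rfl
          exact ⟨e⟩
      rw [Finset.sum_congr rfl (fun i _ => by rw [hif i, ite_mul, one_mul, zero_mul])]
      rw [Finset.sum_ite_eq' Finset.univ i₀ (fun i => finrank k (V i))]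
      simp only [Finset.mem_univ, if_true]
      exact ((FDRep.isoToLinearEquiv e).finrank_eq).symm
    have hW_hom : ∀ i, finrank k (W ⟶ V i)
        = finrank k (subrep W S hS ⟶ V i) + finrank k (subrep W Q hQ ⟶ V i) := fun i => by
      rw [(homProdEquiv W (V i) hS hQ hSQ).finrank_eq, Module.finrank_prod]
    calc finrank k W = finrank k S + finrank k Q := hadd.symm
      _ = (∑ i, finrank k (subrep W S hS ⟶ V i) * finrank k (V i))
          + (∑ i, finrank k (subrep W Q hQ ⟶ V i) * finrank k (V i)) := by
          have hQ' : finrank k Q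
              = ∑ i, finrank k (subrep W Q hQ ⟶ V i) * finrank k (V i) := hQsum
          rw [hSsum, hQ']
      _ = ∑ i, (finrank k (subrep W S hS ⟶ V i) + finrank k (subrep W Q hQ ⟶ V i))
            * finrank k (V i) := by
          rw [← Finset.sum_add_distrib]
          exact Finset.sum_congr rfl fun i _ => (add_mul _ _ _).symm
      _ = ∑ i, finrank k (W ⟶ V i) * finrank k (V i) := by
          exact Finset.sum_congr rfl fun i _ => by rw [hW_hom i]

end Aux


namespace Aux


lemma finrank_hom_char [Fintype G] [Invertible (Fintype.card G : k)] (X Y : FDRep k G) :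
    (finrank k (X ⟶ Y) : k)
      = ⅟(Fintype.card G : k) • ∑ g : G, X.character g⁻¹ * Y.character g := by
  haveI : Invertible (Nat.card G : k) := by rw [Nat.card_eq_fintype_card]; assumption
  rw [← FDRep.scalar_product_char_eq_finrank_equivariant, smul_eq_mul, invOf_eq_inv,
    Nat.card_eq_fintype_card]
  congr 1
  exact Finset.sum_congr rfl fun g _ => mul_comm _ _

lemma char_inv_perm {n : ℕ} {k : Type} [Field k] (X : FDRep k (Equiv.Perm (Fin n)))
    (g : Equiv.Perm (Fin n)) : X.character g⁻¹ = X.character g := by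
  have hconj : IsConj g g⁻¹ :=
    Equiv.Perm.isConj_iff_cycleType_eq.mpr (Equiv.Perm.cycleType_inv g).symm
  obtain ⟨c, hc⟩ := isConj_iff.mp hconj
  rw [← hc, FDRep.char_conj]


end Aux

end Auxiliary

set_option maxHeartbeats 1000000

section Bridge
open Module

variable {n : ℕ}

noncomputable instance : Invertible ((Fintype.card (SymGrp n) : ℂ)) :=
  invertibleOfNonzero (by exact_mod_cast Fintype.card_ne_zero)

instance : NeZero ((Fintype.card (SymGrp n) : ℂ)) :=
  ⟨by exact_mod_cast Fintype.card_ne_zero⟩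

lemma kron_char (V : Nat.Partition n → FDRep ℂ (SymGrp n)) (l m v : Nat.Partition n) :
    (kron V l m v : ℂ) = ⅟(Fintype.card (SymGrp n) : ℂ) •
      ∑ g : SymGrp n, (V m).character g * (V v).character g * (V l).character g := by
  have h := Aux.finrank_hom_char (MonoidalCategoryStruct.tensorObj (V m) (V v)) (V l)
  rw [kron, h]
  congr 1
  refine Finset.sum_congr rfl fun g _ => ?_
  rw [Aux.char_inv_perm, FDRep.char_tensor, Pi.mul_apply]

lemma kron_swap₁ (V : Nat.Partition n → FDRep ℂ (SymGrp n)) (l m v : Nat.Partition n) :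
    kron V m l v = kron V l m v := by
  have h1 := kron_char V m l v
  have h2 := kron_char V l m v
  have : (kron V m l v : ℂ) = (kron V l m v : ℂ) := by
    rw [h1, h2]
    congr 1
    refine Finset.sum_congr rfl fun g _ => by ring
  exact_mod_cast this

lemma kron_swap₂ (V : Nat.Partition n → FDRep ℂ (SymGrp n)) (l m v : Nat.Partition n) :
    kron V v l m = kron V l m v := by
  have h1 := kron_char V v l m
  have h2 := kron_char V l m v
  have : (kron V v l m : ℂ) = (kron V l m v : ℂ) := by
    rw [h1, h2]
    congr 1
    refine Finset.sum_congr rfl fun g _ => by ring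
  exact_mod_cast this

lemma sum_kron (V : Nat.Partition n → FDRep ℂ (SymGrp n)) (hV : IsIrrFamily V)
    (m v : Nat.Partition n) :
    dimRep (V m) * dimRep (V v) = ∑ l, kron V l m v * dimRep (V l) := by
  have h : dimRep (MonoidalCategoryStruct.tensorObj (V m) (V v))
      = ∑ l, kron V l m v * dimRep (V l) :=
    Aux.master V hV.1 (fun i j hij => hV.2.1 i j hij) hV.2.2
      (MonoidalCategoryStruct.tensorObj (V m) (V v))
  have htens : dimRep (MonoidalCategoryStruct.tensorObj (V m) (V v))
      = dimRep (V m) * dimRep (V v) := Module.finrank_tensorProduct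
  exact htens.symm.trans h

lemma dim_pos (V : Nat.Partition n → FDRep ℂ (SymGrp n)) (hV : IsIrrFamily V)
    (l : Nat.Partition n) : 0 < dimRep (V l) :=
  Aux.finrank_pos_of_simple (V l) (hV.1 l)

lemma dim_le_maxDim (V : Nat.Partition n → FDRep ℂ (SymGrp n)) (l : Nat.Partition n) :
    dimRep (V l) ≤ maxDim V :=
  Finset.le_sup (f := fun l => dimRep (V l)) (Finset.mem_univ l)

end Bridge

/-- If `f^μ, f^ν ≥ D(n)/a` for some `a ≥ 1`, then there is `λ ⊢ n` with
`f^λ ≥ D(n)/(a√p(n))` and `g(λ,μ,ν) ≥ D(n)/(a²p(n))`. -/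
theorem stmt5 (n : ℕ) (V : Nat.Partition n → FDRep ℂ (SymGrp n)) (hV : IsIrrFamily V)
    (m v : Nat.Partition n) (a : ℝ) (ha : 1 ≤ a)
    (hm : (maxDim V : ℝ) / a ≤ (dimRep (V m) : ℝ))
    (hv : (maxDim V : ℝ) / a ≤ (dimRep (V v) : ℝ)) :
    ∃ l : Nat.Partition n,
      (maxDim V : ℝ) / (a * Real.sqrt (numPart n)) ≤ (dimRep (V l) : ℝ) ∧
      (maxDim V : ℝ) / (a ^ 2 * (numPart n : ℝ)) ≤ (kron V l m v : ℝ) := by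
  classical
  have ha0 : (0:ℝ) < a := lt_of_lt_of_le one_pos ha
  have hppos : (0:ℝ) < (numPart n : ℝ) := by
    have : 0 < numPart n := Fintype.card_pos
    exact_mod_cast this
  have hfpos : ∀ l, (0:ℝ) < (dimRep (V l) : ℝ) := fun l => by
    exact_mod_cast dim_pos V hV l
  have hfD : ∀ l, ((dimRep (V l) : ℝ)) ≤ (maxDim V : ℝ) := fun l => by
    exact_mod_cast dim_le_maxDim V l
  have hD0 : (0:ℝ) < (maxDim V : ℝ) := lt_of_lt_of_le (hfpos default) (hfD default)
  have hDm : (maxDim V : ℝ) ≤ a * (dimRep (V m) : ℝ) := by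
    rw [div_le_iff₀ ha0] at hm; linarith
  have hDv : (maxDim V : ℝ) ≤ a * (dimRep (V v) : ℝ) := by
    rw [div_le_iff₀ ha0] at hv; linarith
  have hsum : ((dimRep (V m) : ℝ)) * (dimRep (V v) : ℝ)
      = ∑ l, (kron V l m v : ℝ) * (dimRep (V l) : ℝ) := by
    exact_mod_cast sum_kron V hV m v
  have hD2 : (maxDim V : ℝ)^2 ≤ a^2 * ((dimRep (V m) : ℝ) * (dimRep (V v) : ℝ)) := by
    nlinarith [hDm, hDv, hfpos m, hfpos v, hD0]
  -- pick the partition with the largest term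
  obtain ⟨l₀, -, hl₀⟩ := Finset.exists_max_image Finset.univ
    (fun l => (kron V l m v : ℝ) * (dimRep (V l) : ℝ)) ⟨m, Finset.mem_univ m⟩
  have hmax : ∑ l, (kron V l m v : ℝ) * (dimRep (V l) : ℝ)
      ≤ (numPart n : ℝ) * ((kron V l₀ m v : ℝ) * (dimRep (V l₀) : ℝ)) := by
    calc ∑ l, (kron V l m v : ℝ) * (dimRep (V l) : ℝ)
        ≤ ∑ _l : Nat.Partition n, (kron V l₀ m v : ℝ) * (dimRep (V l₀) : ℝ) :=
          Finset.sum_le_sum (fun i _ => hl₀ i (Finset.mem_univ i))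
      _ = (numPart n : ℝ) * ((kron V l₀ m v : ℝ) * (dimRep (V l₀) : ℝ)) := by
          rw [Finset.sum_const, nsmul_eq_mul, Finset.card_univ]; rfl
  have hkey : (maxDim V : ℝ)^2
      ≤ a^2 * (numPart n : ℝ) * ((kron V l₀ m v : ℝ) * (dimRep (V l₀) : ℝ)) := by
    calc (maxDim V : ℝ)^2 ≤ a^2 * ((dimRep (V m) : ℝ) * (dimRep (V v) : ℝ)) := hD2
      _ = a^2 * (∑ l, (kron V l m v : ℝ) * (dimRep (V l) : ℝ)) := by rw [hsum]
      _ ≤ a^2 * ((numPart n : ℝ) * ((kron V l₀ m v : ℝ) * (dimRep (V l₀) : ℝ))) := by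
          exact mul_le_mul_of_nonneg_left hmax (by positivity)
      _ = a^2 * (numPart n : ℝ) * ((kron V l₀ m v : ℝ) * (dimRep (V l₀) : ℝ)) := by ring
  -- K ≤ F
  have hb : kron V l₀ m v * dimRep (V m) ≤ dimRep (V l₀) * dimRep (V v) := by
    have h1 := sum_kron V hV l₀ v
    have h2 : kron V m l₀ v * dimRep (V m) ≤ ∑ l', kron V l' l₀ v * dimRep (V l') :=
      Finset.single_le_sum (f := fun l' => kron V l' l₀ v * dimRep (V l'))
        (fun i _ => Nat.zero_le _) (Finset.mem_univ m)
    rw [kron_swap₁, ← h1] at h2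
    exact h2
  have hc : kron V l₀ m v * dimRep (V v) ≤ dimRep (V l₀) * dimRep (V m) := by
    have h1 := sum_kron V hV l₀ m
    have h2 : kron V v l₀ m * dimRep (V v) ≤ ∑ l', kron V l' l₀ m * dimRep (V l') :=
      Finset.single_le_sum (f := fun l' => kron V l' l₀ m * dimRep (V l'))
        (fun i _ => Nat.zero_le _) (Finset.mem_univ v)
    rw [kron_swap₂, ← h1] at h2
    exact h2
  have hb' : (kron V l₀ m v : ℝ) * (dimRep (V m) : ℝ)
      ≤ (dimRep (V l₀) : ℝ) * (dimRep (V v) : ℝ) := by exact_mod_cast hb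
  have hc' : (kron V l₀ m v : ℝ) * (dimRep (V v) : ℝ)
      ≤ (dimRep (V l₀) : ℝ) * (dimRep (V m) : ℝ) := by exact_mod_cast hc
  have hK0 : (0:ℝ) ≤ (kron V l₀ m v : ℝ) := Nat.cast_nonneg _
  have hF0 : (0:ℝ) ≤ (dimRep (V l₀) : ℝ) := Nat.cast_nonneg _
  have hKF : (kron V l₀ m v : ℝ) ≤ (dimRep (V l₀) : ℝ) := by
    have h3 : ((kron V l₀ m v : ℝ) * (dimRep (V m) : ℝ)) * ((kron V l₀ m v : ℝ) * (dimRep (V v) : ℝ))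
        ≤ ((dimRep (V l₀) : ℝ) * (dimRep (V v) : ℝ)) * ((dimRep (V l₀) : ℝ) * (dimRep (V m) : ℝ)) :=
      mul_le_mul hb' hc' (mul_nonneg hK0 (hfpos v).le) (mul_nonneg hF0 (hfpos v).le)
    nlinarith [h3, hfpos m, hfpos v, hK0, hF0, sq_nonneg ((kron V l₀ m v : ℝ) + (dimRep (V l₀) : ℝ))]
  refine ⟨l₀, ?_, ?_⟩
  · -- dimension bound
    have hsq : Real.sqrt (numPart n : ℝ) > 0 := Real.sqrt_pos.mpr hppos
    rw [div_le_iff₀ (by positivity)]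
    have h7 : (maxDim V : ℝ)^2 ≤ ((dimRep (V l₀) : ℝ) * (a * Real.sqrt (numPart n : ℝ)))^2 := by
      have he : ((dimRep (V l₀) : ℝ) * (a * Real.sqrt (numPart n : ℝ)))^2
          = a^2 * (numPart n : ℝ) * ((dimRep (V l₀) : ℝ) * (dimRep (V l₀) : ℝ)) := by
        rw [mul_pow, mul_pow, Real.sq_sqrt hppos.le]; ring
      rw [he]
      calc (maxDim V : ℝ)^2
          ≤ a^2 * (numPart n : ℝ) * ((kron V l₀ m v : ℝ) * (dimRep (V l₀) : ℝ)) := hkey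
        _ ≤ a^2 * (numPart n : ℝ) * ((dimRep (V l₀) : ℝ) * (dimRep (V l₀) : ℝ)) := by
            apply mul_le_mul_of_nonneg_left (mul_le_mul_of_nonneg_right hKF hF0) (by positivity)
    exact (pow_le_pow_iff_left₀ hD0.le (mul_nonneg hF0 (mul_nonneg ha0.le (Real.sqrt_nonneg _))) two_ne_zero).mp h7
  · -- Kronecker bound
    rw [div_le_iff₀ (by positivity)]
    have h8 : (maxDim V : ℝ) * (maxDim V : ℝ)
        ≤ ((kron V l₀ m v : ℝ) * (a ^ 2 * (numPart n : ℝ))) * (maxDim V : ℝ) := by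
      calc (maxDim V : ℝ) * (maxDim V : ℝ) = (maxDim V : ℝ)^2 := (pow_two _).symm
        _ ≤ a^2 * (numPart n : ℝ) * ((kron V l₀ m v : ℝ) * (dimRep (V l₀) : ℝ)) := hkey
        _ ≤ a^2 * (numPart n : ℝ) * ((kron V l₀ m v : ℝ) * (maxDim V : ℝ)) := by
            exact mul_le_mul_of_nonneg_left (mul_le_mul_of_nonneg_left (hfD l₀) hK0)
              (mul_nonneg (sq_nonneg a) hppos.le)
        _ = ((kron V l₀ m v : ℝ) * (a ^ 2 * (numPart n : ℝ))) * (maxDim V : ℝ) := by ring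
    exact le_of_mul_le_mul_right h8 hD0
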